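/- Define, for x ∈ ℝ^n, y = max_{i ∈ N_{μ(x)}} x_i and z = min_{i ∈ N_{M(x)}} x_i, where N_{μ(x)} and N_{M(x)} are the k-nearest-neighbor sets of the minimum-opinion and maximum-opinion agents respectively. Then z ≤ y holds for all x ∈ ℝ^n if and only if n < 2k. -/

import Mathlib

open scoped Classical
open Finset

noncomputable def nearList {n : ℕ} (x : Fin n → ℝ) (i : Fin n) : List (Fin n) :=
  @List.insertionSort (Fin n)
    (fun j j' => |x j - x i| < |x j' - x i| ∨ (|x j - x i| = |x j' - x i| ∧ j ≤ j'))
    (Classical.decRel _) (List.finRange n)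

/-- The set of the `k` agents nearest to `i` in opinion distance (ties broken by lower index). -/
noncomputable def nbr {n : ℕ} (k : ℕ) (x : Fin n → ℝ) (i : Fin n) : Finset (Fin n) :=
  ((nearList x i).take k).toFinset

/-- The asynchronous update `f(x,i)`. -/
noncomputable def upd {n : ℕ} (k : ℕ) (x : Fin n → ℝ) (i : Fin n) : Fin n → ℝ :=
  Function.update x i ((∑ j ∈ nbr k x i, x j) / k)

/-- A configuration is clustered if all neighbors of every agent share its opinion. -/
def Clustered {n : ℕ} (k : ℕ) (x : Fin n → ℝ) : Prop :=
  ∀ i : Fin n, ∀ j ∈ nbr k x i, x j = x i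

/-- `μ(x)`: lowest index attaining the minimum. -/
noncomputable def argminIdx {n : ℕ} [NeZero n] (x : Fin n → ℝ) : Fin n :=
  (Finset.univ.filter fun i => ∀ j, x i ≤ x j).min' (by
    obtain ⟨i, -, hi⟩ := Finset.exists_min_image Finset.univ x Finset.univ_nonempty
    exact ⟨i, Finset.mem_filter.mpr ⟨Finset.mem_univ _, fun j => hi j (Finset.mem_univ j)⟩⟩)

/-- `M(x)`: lowest index attaining the maximum. -/
noncomputable def argmaxIdx {n : ℕ} [NeZero n] (x : Fin n → ℝ) : Fin n :=
  argminIdx (fun i => -x i)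

/-- Trajectory of the dynamics with (possibly state-dependent) update selector `σ`. -/
noncomputable def traj {n : ℕ} (k : ℕ) (σ : ℕ → (Fin n → ℝ) → Fin n) (x0 : Fin n → ℝ) :
    ℕ → Fin n → ℝ
  | 0 => x0
  | t + 1 => upd k (traj k σ x0 t) (σ t (traj k σ x0 t))



section helpers
variable {n k : ℕ} {x : Fin n → ℝ} {i : Fin n}

private def rel (x : Fin n → ℝ) (i : Fin n) (j j' : Fin n) : Prop :=
  |x j - x i| < |x j' - x i| ∨ (|x j - x i| = |x j' - x i| ∧ j ≤ j')

lemma nearList_perm : (nearList x i).Perm (List.finRange n) :=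
  @List.perm_insertionSort (Fin n) _ (Classical.decRel _) (List.finRange n)

lemma nearList_nodup : (nearList x i).Nodup :=
  nearList_perm.nodup_iff.mpr (List.nodup_finRange n)

lemma nearList_length : (nearList x i).length = n := by
  rw [nearList_perm.length_eq, List.length_finRange]

lemma nbr_card (hkn : k ≤ n) : (nbr k x i).card = k := by
  rw [nbr, List.toFinset_card_of_nodup (nearList_nodup.sublist (List.take_sublist _ _))]
  rw [List.length_take, nearList_length]; omega

instance : IsTotal (Fin n) (rel x i) := ⟨by
  intro a b
  rcases lt_trichotomy (|x a - x i|) (|x b - x i|) with h | h | h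
  · exact Or.inl (Or.inl h)
  · rcases le_total a b with h2 | h2
    · exact Or.inl (Or.inr ⟨h, h2⟩)
    · exact Or.inr (Or.inr ⟨h.symm, h2⟩)
  · exact Or.inr (Or.inl h)⟩

instance : IsTrans (Fin n) (rel x i) := ⟨by
  rintro a b c (h | ⟨h, h'⟩) (g | ⟨g, g'⟩)
  · exact Or.inl (h.trans g)
  · exact Or.inl (g ▸ h)
  · exact Or.inl (h ▸ g)
  · exact Or.inr ⟨h.trans g, h'.trans g'⟩⟩

lemma nearList_sorted : (nearList x i).Pairwise (rel x i) :=
  @List.pairwise_insertionSort (Fin n) _ (Classical.decRel _) _ _ (List.finRange n)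

lemma nbr_dist_le {j s : Fin n} (hj : j ∈ nbr k x i) (hs : s ∉ nbr k x i) :
    |x j - x i| ≤ |x s - x i| := by
  rw [nbr, List.mem_toFinset] at hj hs
  have hs' : s ∈ (nearList x i).drop k := by
    have : s ∈ nearList x i := nearList_perm.mem_iff.mpr (List.mem_finRange s)
    rw [← List.take_append_drop k (nearList x i), List.mem_append] at this
    tauto
  have := nearList_sorted.rel_of_mem_take_of_mem_drop hj hs'
  rcases this with h | ⟨h, -⟩
  · exact h.le
  · exact h.le

/-- If at least `k` agents share `i`'s opinion, all neighbors of `i` share it. -/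
lemma nbr_const (hkn : k ≤ n) {S : Finset (Fin n)} (hScard : k ≤ S.card)
    (hS : ∀ s ∈ S, x s = x i) : ∀ j ∈ nbr k x i, x j = x i := by
  by_contra hcon
  push_neg at hcon
  obtain ⟨j, hj, hjne⟩ := hcon
  have hjpos : 0 < |x j - x i| := abs_pos.mpr (sub_ne_zero.mpr hjne)
  have hSsub : S ⊆ nbr k x i := by
    intro s hsS
    by_contra hs
    have := nbr_dist_le hj hs
    rw [show x s - x i = 0 by rw [hS s hsS]; ring, abs_zero] at this
    linarith
  have hjS : j ∉ S := fun h => hjne (hS j h)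
  have : S.card < (nbr k x i).card :=
    Finset.card_lt_card (Finset.ssubset_iff_of_subset hSsub |>.mpr ⟨j, hj, hjS⟩)
  rw [nbr_card hkn] at this
  omega

lemma nbr_nonempty (hk : 1 ≤ k) (hkn : k ≤ n) : (nbr k x i).Nonempty := by
  rw [← Finset.card_pos, nbr_card hkn]; omega

end helpers

lemma image_const {n : ℕ} {x : Fin n → ℝ} {A : Finset (Fin n)} (hA : A.Nonempty) {c : ℝ}
    (h : ∀ a ∈ A, x a = c) : x '' (A : Set (Fin n)) = {c} := by
  ext y
  simp only [Set.mem_image, Finset.mem_coe, Set.mem_singleton_iff]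
  constructor
  · rintro ⟨a, ha, rfl⟩; exact h a ha
  · rintro rfl; exact ⟨hA.choose, hA.choose_spec, h _ hA.choose_spec⟩


lemma argminIdx_le {n : ℕ} [NeZero n] (x : Fin n → ℝ) (j : Fin n) :
    x (argminIdx x) ≤ x j := by
  have := Finset.min'_mem (Finset.univ.filter fun i => ∀ j, x i ≤ x j) (by
    obtain ⟨i, -, hi⟩ := Finset.exists_min_image Finset.univ x Finset.univ_nonempty
    exact ⟨i, Finset.mem_filter.mpr ⟨Finset.mem_univ _, fun j => hi j (Finset.mem_univ j)⟩⟩)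
  exact (Finset.mem_filter.mp this).2 j

lemma le_argmaxIdx {n : ℕ} [NeZero n] (x : Fin n → ℝ) (j : Fin n) :
    x j ≤ x (argmaxIdx x) := by
  have := argminIdx_le (fun i => -x i) j
  simpa [argmaxIdx] using this


/-- `z ≤ y` for every configuration iff `n < 2k`. -/
theorem z_le_y_iff {n k : ℕ} [NeZero n] (hk : 1 ≤ k) (hkn : k ≤ n) :
    (∀ x : Fin n → ℝ,
      sInf (x '' (nbr k x (argmaxIdx x) : Set (Fin n))) ≤
        sSup (x '' (nbr k x (argminIdx x) : Set (Fin n)))) ↔ n < 2 * k := by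
  constructor
  · intro h
    by_contra hn
    push_neg at hn
    -- counterexample: first k agents at 0, rest at 1
    set x : Fin n → ℝ := fun i => if (i : ℕ) < k then (0:ℝ) else 1 with hx
    have hval : ∀ j : Fin n, x j = 0 ∨ x j = 1 := by
      intro j; by_cases hj : (j : ℕ) < k <;> simp [hx, hj]
    have hkltn : k < n := by omega
    have hx0 : x ⟨0, Nat.pos_of_ne_zero (NeZero.ne n)⟩ = 0 := by
      show (if ((0 : ℕ)) < k then (0:ℝ) else 1) = 0; rw [if_pos (by omega)]
    have hxk : x ⟨k, hkltn⟩ = 1 := by simp [hx]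
    -- min value is 0
    have hmin : x (argminIdx x) = 0 := by
      have h1 := argminIdx_le x ⟨0, Nat.pos_of_ne_zero (NeZero.ne n)⟩
      rw [hx0] at h1
      rcases hval (argminIdx x) with h2 | h2
      · exact h2
      · linarith
    have hμ : ((argminIdx x : Fin n) : ℕ) < k := by
      by_contra hc
      have : x (argminIdx x) = 1 := by
        show (if ((argminIdx x : Fin n) : ℕ) < k then (0:ℝ) else 1) = 1; simp [hc]
      rw [hmin] at this; norm_num at this
    -- max value is 1
    have hmax : x (argmaxIdx x) = 1 := by
      have h1 := le_argmaxIdx x ⟨k, hkltn⟩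
      rw [hxk] at h1
      rcases hval (argmaxIdx x) with h2 | h2
      · linarith
      · exact h2
    have hM : ¬ ((argmaxIdx x : Fin n) : ℕ) < k := by
      intro hc
      have : x (argmaxIdx x) = 0 := by
        show (if ((argmaxIdx x : Fin n) : ℕ) < k then (0:ℝ) else 1) = 0; simp [hc]
      rw [hmax] at this; norm_num at this
    -- the low block
    have hSlo : ∀ j ∈ nbr k x (argminIdx x), x j = x (argminIdx x) := by
      refine nbr_const hkn (S := Finset.univ.filter fun j : Fin n => (j : ℕ) < k) ?_ ?_
      · have : (Finset.univ.filter fun j : Fin n => (j : ℕ) < k) =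
            (Finset.range k).attachFin (fun m hm => lt_of_lt_of_le (Finset.mem_range.1 hm) hkn) := by
          ext a; simp [Finset.mem_attachFin]
        rw [this, Finset.card_attachFin, Finset.card_range]
      · intro s hs
        rw [hmin]
        simp only [Finset.mem_filter] at hs
        simp [hx, hs.2]
    have hShi : ∀ j ∈ nbr k x (argmaxIdx x), x j = x (argmaxIdx x) := by
      refine nbr_const hkn (S := Finset.univ.filter fun j : Fin n => ¬ (j : ℕ) < k) ?_ ?_
      · have hc : (Finset.univ.filter fun j : Fin n => (j : ℕ) < k).card +
            (Finset.univ.filter fun j : Fin n => ¬ (j : ℕ) < k).card = n := by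
          rw [Finset.card_filter_add_card_filter_not]
          simp
        have : (Finset.univ.filter fun j : Fin n => (j : ℕ) < k) =
            (Finset.range k).attachFin (fun m hm => lt_of_lt_of_le (Finset.mem_range.1 hm) hkn) := by
          ext a; simp [Finset.mem_attachFin]
        rw [this, Finset.card_attachFin, Finset.card_range] at hc
        omega
      · intro s hs
        rw [hmax]
        simp only [Finset.mem_filter] at hs
        simp [hx, hs.2]
    have key := h x
    rw [image_const (nbr_nonempty hk hkn) hSlo, image_const (nbr_nonempty hk hkn) hShi,
      hmin, hmax, csInf_singleton, csSup_singleton] at key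
    norm_num at key
  · intro hn x
    set A := nbr k x (argmaxIdx x)
    set B := nbr k x (argminIdx x)
    have hAB : (A ∩ B).Nonempty := by
      rw [← Finset.card_pos]
      have h1 : (A ∪ B).card + (A ∩ B).card = A.card + B.card :=
        Finset.card_union_add_card_inter A B
      have h2 : (A ∪ B).card ≤ n := le_trans (Finset.card_le_univ _) (by simp)
      rw [nbr_card hkn, nbr_card hkn] at h1
      omega
    obtain ⟨j, hj⟩ := hAB
    rw [Finset.mem_inter] at hj
    have hjA : x j ∈ x '' (A : Set (Fin n)) := ⟨j, hj.1, rfl⟩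
    have hjB : x j ∈ x '' (B : Set (Fin n)) := ⟨j, hj.2, rfl⟩
    calc sInf (x '' (A : Set (Fin n))) ≤ x j :=
          csInf_le (Set.Finite.bddBelow (A.finite_toSet.image x)) hjA
      _ ≤ sSup (x '' (B : Set (Fin n))) :=
          le_csSup (Set.Finite.bddAbove (B.finite_toSet.image x)) hjB
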